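/- For every set partition A of {1,…,n}, the depth-index equals the crossing-index: t(A) = c(A). -/

import Mathlib

open scoped Classical
/-- `(i,j)` is an arc of the set partition `P` of `{1,…,n}` (realized on `Fin n`):
`i < j`, both lie in a common block, and no element of that block is strictly
between `i` and `j`. -/
def IsArc {n : ℕ} (P : Finpartition (Finset.univ : Finset (Fin n))) (i j : Fin n) : Prop :=
  i < j ∧ ∃ b ∈ P.parts, i ∈ b ∧ j ∈ b ∧ ∀ k ∈ b, ¬(i < k ∧ k < j)

/-- The finite set of arcs of a set partition. -/
noncomputable def arcs {n : ℕ} (P : Finpartition (Finset.univ : Finset (Fin n))) :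
    Finset (Fin n × Fin n) :=
  Finset.univ.filter (fun p => IsArc P p.1 p.2)

/-- Depth of a vertex `v`: the number of arcs `(r,s)` with `r < v < s`. -/
noncomputable def depthV {n : ℕ} (P : Finpartition (Finset.univ : Finset (Fin n)))
    (v : Fin n) : ℕ :=
  ((arcs P).filter (fun p => p.1 < v ∧ v < p.2)).card

/-- Depth of an arc `α = (i,j)`: the number of arcs `(r,s)` with `r < i` and `s > j`. -/
noncomputable def depthArc {n : ℕ} (P : Finpartition (Finset.univ : Finset (Fin n)))
    (α : Fin n × Fin n) : ℕ :=
  ((arcs P).filter (fun p => p.1 < α.1 ∧ α.2 < p.2)).card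

/-- Depth of a block `b` (with minimum `i` and maximum `j`): the number of arcs
`(r,s)` with `r < i` and `s > j`; equivalently (for the nonempty blocks of a
partition) the arcs lying strictly above every vertex of `b`. -/
noncomputable def depthBlock {n : ℕ} (P : Finpartition (Finset.univ : Finset (Fin n)))
    (b : Finset (Fin n)) : ℕ :=
  ((arcs P).filter (fun p => ∀ v ∈ b, p.1 < v ∧ v < p.2)).card

/-- Two arcs `(i,j)` and `(r,s)` cross if `i < r < j < s` or `r < i < s < j`. -/
def ArcCross {n : ℕ} (α β : Fin n × Fin n) : Prop :=
  (α.1 < β.1 ∧ β.1 < α.2 ∧ α.2 < β.2) ∨ (β.1 < α.1 ∧ α.1 < β.2 ∧ β.2 < α.2)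

/-- `cross(α)`: the number of blocks of `P` containing at least one arc crossing `α`. -/
noncomputable def crossNum {n : ℕ} (P : Finpartition (Finset.univ : Finset (Fin n)))
    (α : Fin n × Fin n) : ℕ :=
  (P.parts.filter (fun b => ∃ p ∈ arcs P, p.1 ∈ b ∧ p.2 ∈ b ∧ ArcCross α p)).card

/-- The depth-index `t(A) = Σ_{i=1}^{k}(n−i) − Σ_v depth(v) + Σ_α depth(α)`,
where `k` is the number of arcs. -/
noncomputable def tIdx {n : ℕ} (P : Finpartition (Finset.univ : Finset (Fin n))) : ℤ :=
  (∑ i ∈ Finset.range (arcs P).card, ((n : ℤ) - (i + 1)))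
    - (∑ v : Fin n, (depthV P v : ℤ))
    + ∑ α ∈ arcs P, (depthArc P α : ℤ)

/-- The crossing-index `c(A) = Σ_{i=1}^{k}(n−i) − Σ_β depth(β) − Σ_α cross(α)`. -/
noncomputable def cIdx {n : ℕ} (P : Finpartition (Finset.univ : Finset (Fin n))) : ℤ :=
  (∑ i ∈ Finset.range (arcs P).card, ((n : ℤ) - (i + 1)))
    - (∑ b ∈ P.parts, (depthBlock P b : ℤ))
    - ∑ α ∈ arcs P, (crossNum P α : ℤ)

/-- The rook `φ(A)` associated to a set partition: `φ(A)(j) = i` (in 1-based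
values) whenever `(i,j)` is an arc, and `φ(A)(j) = 0` otherwise. Since at most
one arc ends at `j`, the sum below picks out that unique value. -/
noncomputable def phiRook {n : ℕ} (P : Finpartition (Finset.univ : Finset (Fin n))) :
    Fin n → ℕ :=
  fun j => ∑ i : Fin n, if IsArc P i j then i.val + 1 else 0

section aux
variable {n : ℕ} {P : Finpartition (Finset.univ : Finset (Fin n))}

lemma mem_arcs {p : Fin n × Fin n} : p ∈ arcs P ↔ IsArc P p.1 p.2 := by
  simp [arcs]

lemma arc_spec {i j : Fin n} (h : IsArc P i j) {b : Finset (Fin n)}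
    (hb : b ∈ P.parts) (hib : i ∈ b) :
    j ∈ b ∧ ∀ k ∈ b, ¬(i < k ∧ k < j) := by
  obtain ⟨_, b0, hb0, hi0, hj0, hno⟩ := h
  obtain rfl : b = b0 := P.eq_of_mem_parts hb hb0 hib hi0
  exact ⟨hj0, hno⟩

lemma arc_spec' {i j : Fin n} (h : IsArc P i j) {b : Finset (Fin n)}
    (hb : b ∈ P.parts) (hjb : j ∈ b) :
    i ∈ b ∧ ∀ k ∈ b, ¬(i < k ∧ k < j) := by
  obtain ⟨_, b0, hb0, hi0, hj0, hno⟩ := h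
  obtain rfl : b = b0 := P.eq_of_mem_parts hb hb0 hjb hj0
  exact ⟨hi0, hno⟩

lemma arc_unique {i i' j : Fin n} (h : IsArc P i j) (h' : IsArc P i' j) : i = i' := by
  obtain ⟨hij, b0, hb0, hi0, hj0, hno⟩ := h
  obtain ⟨hi'0, hno'⟩ := arc_spec' h' hb0 hj0
  rcases lt_trichotomy i i' with hlt | heq | hgt
  · exact absurd ⟨hlt, h'.1⟩ (hno i' hi'0)
  · exact heq
  · exact absurd ⟨hgt, hij⟩ (hno' i hi0)

lemma arc_of_max {b : Finset (Fin n)} (hb : b ∈ P.parts) {i j : Fin n}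
    (hi : i ∈ b) (hj : j ∈ b) (hij : i < j) (hmax : ∀ x ∈ b, x < j → x ≤ i) :
    IsArc P i j :=
  ⟨hij, b, hb, hi, hj, fun k hk hc => absurd (hmax k hk hc.2) (not_le.2 hc.1)⟩

lemma exists_max_below {b : Finset (Fin n)} {j w : Fin n} (hw : w ∈ b) (hwj : w < j) :
    ∃ i, i ∈ b ∧ i < j ∧ w ≤ i ∧ ∀ x ∈ b, x < j → x ≤ i := by
  have hUne : (b.filter (fun x => x < j)).Nonempty :=
    ⟨w, Finset.mem_filter.2 ⟨hw, hwj⟩⟩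
  obtain ⟨h1, h2⟩ := Finset.mem_filter.1 (Finset.max'_mem _ hUne)
  refine ⟨(b.filter (fun x => x < j)).max' hUne, h1, h2, ?_, ?_⟩
  · exact Finset.le_max' (b.filter (fun x => x < j)) w (Finset.mem_filter.2 ⟨hw, hwj⟩)
  · intro x hx hxj
    exact Finset.le_max' (b.filter (fun y => y < j)) x (Finset.mem_filter.2 ⟨hx, hxj⟩)

lemma exists_min_above {b : Finset (Fin n)} {i w : Fin n} (hw : w ∈ b) (hiw : i < w) :
    ∃ j, j ∈ b ∧ i < j ∧ j ≤ w ∧ ∀ x ∈ b, i < x → j ≤ x := by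
  have hUne : (b.filter (fun x => i < x)).Nonempty :=
    ⟨w, Finset.mem_filter.2 ⟨hw, hiw⟩⟩
  obtain ⟨h1, h2⟩ := Finset.mem_filter.1 (Finset.min'_mem _ hUne)
  refine ⟨(b.filter (fun x => i < x)).min' hUne, h1, h2, ?_, ?_⟩
  · exact Finset.min'_le (b.filter (fun x => i < x)) w (Finset.mem_filter.2 ⟨hw, hiw⟩)
  · intro x hx hix
    exact Finset.min'_le (b.filter (fun y => i < y)) x (Finset.mem_filter.2 ⟨hx, hix⟩)

lemma exists_pred {b : Finset (Fin n)} (hb : b ∈ P.parts) {j w : Fin n}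
    (hj : j ∈ b) (hw : w ∈ b) (hwj : w < j) :
    ∃ i, IsArc P i j ∧ i ∈ b ∧ w ≤ i ∧ i < j ∧ ∀ x ∈ b, x < j → x ≤ i := by
  obtain ⟨i, hib, hij, hwi, hmax⟩ := exists_max_below hw hwj
  exact ⟨i, arc_of_max hb hib hj hij hmax, hib, hwi, hij, hmax⟩

lemma exists_succ {b : Finset (Fin n)} (hb : b ∈ P.parts) {i w : Fin n}
    (hi : i ∈ b) (hw : w ∈ b) (hiw : i < w) :
    ∃ j, IsArc P i j ∧ j ∈ b ∧ i < j ∧ j ≤ w := by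
  obtain ⟨j, hjb, hij, hjw, hmin⟩ := exists_min_above hw hiw
  refine ⟨j, arc_of_max hb hi hjb hij ?_, hjb, hij, hjw⟩
  intro x hx hxj
  by_contra hxi
  push_neg at hxi
  exact absurd hxj (not_lt.2 (hmin x hx hxi))

lemma perBlock {r s : Fin n} (hβ : IsArc P r s) {b : Finset (Fin n)} (hb : b ∈ P.parts) :
    ((arcs P).filter (fun α => (r < α.1 ∧ α.2 < s) ∧ α.1 ∈ b ∧ α.2 ∈ b)).card
      + ((if ∀ v ∈ b, r < v ∧ v < s then 1 else 0)
      + (if ∃ p ∈ arcs P, p.1 ∈ b ∧ p.2 ∈ b ∧ ArcCross (r, s) p then 1 else 0))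
    = (b.filter (fun v => r < v ∧ v < s)).card := by
  by_cases hSe : (b.filter (fun v => r < v ∧ v < s)).Nonempty
  -- main case
  · obtain ⟨v0, hv0⟩ := hSe
    obtain ⟨hv0b, hv0r, hv0s⟩ := Finset.mem_filter.1 hv0
    have hSne : (b.filter (fun v => r < v ∧ v < s)).Nonempty := ⟨v0, hv0⟩
    have hrb : r ∉ b := fun hrB => (arc_spec hβ hb hrB).2 v0 hv0b ⟨hv0r, hv0s⟩
    have hsb : s ∉ b := fun hsB => (arc_spec' hβ hb hsB).2 v0 hv0b ⟨hv0r, hv0s⟩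
    have hj₀S : (b.filter (fun v => r < v ∧ v < s)).min' hSne
        ∈ b.filter (fun v => r < v ∧ v < s) := Finset.min'_mem _ hSne
    obtain ⟨hj₀b, hj₀r, hj₀s⟩ := Finset.mem_filter.1 hj₀S
    -- Term 1 = card - 1
    have hT1 : ((arcs P).filter
        (fun α => (r < α.1 ∧ α.2 < s) ∧ α.1 ∈ b ∧ α.2 ∈ b)).card
        = ((b.filter (fun v => r < v ∧ v < s)).erase
            ((b.filter (fun v => r < v ∧ v < s)).min' hSne)).card := by
      apply Finset.card_bij (fun α _ => α.2)
      · rintro α hα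
        have harc := mem_arcs.1 (Finset.mem_filter.1 hα).1
        obtain ⟨⟨hr1, hs2⟩, h1b, h2b⟩ := (Finset.mem_filter.1 hα).2
        have h12 : α.1 < α.2 := harc.1
        have h2S : α.2 ∈ b.filter (fun v => r < v ∧ v < s) :=
          Finset.mem_filter.2 ⟨h2b, lt_trans hr1 h12, hs2⟩
        have h1S : α.1 ∈ b.filter (fun v => r < v ∧ v < s) :=
          Finset.mem_filter.2 ⟨h1b, hr1, lt_trans h12 hs2⟩
        refine Finset.mem_erase.2 ⟨?_, h2S⟩
        have hle := Finset.min'_le _ _ h1S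
        exact fun he => absurd (he ▸ hle) (not_le.2 h12)
      · intro α₁ hα₁ α₂ hα₂ he
        have ha1 := mem_arcs.1 (Finset.mem_filter.1 hα₁).1
        have ha2 := mem_arcs.1 (Finset.mem_filter.1 hα₂).1
        refine Prod.ext ?_ he
        apply arc_unique ha1
        rw [he]; exact ha2
      · intro j hj
        obtain ⟨hjne, hjS⟩ := Finset.mem_erase.1 hj
        obtain ⟨hjb, hjr, hjs⟩ := Finset.mem_filter.1 hjS
        have hj₀j : (b.filter (fun v => r < v ∧ v < s)).min' hSne < j :=
          lt_of_le_of_ne (Finset.min'_le _ _ hjS) (Ne.symm hjne)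
        obtain ⟨i, harc, hib, hwi, hij, hmax⟩ := exists_pred hb hjb hj₀b hj₀j
        refine ⟨(i, j), ?_, rfl⟩
        exact Finset.mem_filter.2 ⟨mem_arcs.2 harc,
          ⟨lt_of_lt_of_le hj₀r hwi, hjs⟩, hib, hjb⟩
    rw [hT1, Finset.card_erase_of_mem hj₀S]
    -- Terms 2 + 3 = 1
    have h23 : (if ∀ v ∈ b, r < v ∧ v < s then 1 else 0)
        + (if ∃ p ∈ arcs P, p.1 ∈ b ∧ p.2 ∈ b ∧ ArcCross (r, s) p then 1 else 0) = 1 := by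
      by_cases hin : ∀ v ∈ b, r < v ∧ v < s
      · have hnocr : ¬ ∃ p ∈ arcs P, p.1 ∈ b ∧ p.2 ∈ b ∧ ArcCross (r, s) p := by
          rintro ⟨p, _, h1b, h2b, hcr⟩
          rcases hcr with ⟨h1, h2, h3⟩ | ⟨h1, h2, h3⟩
          · exact absurd (hin p.2 h2b).2 (not_lt.2 (le_of_lt h3))
          · exact absurd (hin p.1 h1b).1 (not_lt.2 (le_of_lt h1))
        rw [if_pos hin, if_neg hnocr]
      · have hcr : ∃ p ∈ arcs P, p.1 ∈ b ∧ p.2 ∈ b ∧ ArcCross (r, s) p := by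
          push_neg at hin
          obtain ⟨w, hwb, hw⟩ := hin
          have hwrs : w < r ∨ s < w := by
            rcases lt_trichotomy w r with h | h | h
            · exact Or.inl h
            · exact absurd (h ▸ hwb) hrb
            · have hsw : s ≤ w := hw h
              refine Or.inr (lt_of_le_of_ne hsw fun he => hsb ?_)
              rw [he]; exact hwb
          rcases hwrs with hwr | hsw
          · -- w < r : take j = min element of b above r, i = its predecessor
            obtain ⟨j, hjb, hrj, hjv0, hjmin⟩ := exists_min_above hv0b hv0r
            obtain ⟨i, harc, hib, _, hij, _⟩ := exists_pred hb hjb hwb (lt_trans hwr hrj)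
            have hir : i < r := by
              rcases lt_trichotomy i r with h | h | h
              · exact h
              · exact absurd (h ▸ hib) hrb
              · exact absurd hij (not_lt.2 (hjmin i hib h))
            exact ⟨(i, j), mem_arcs.2 harc, hib, hjb,
              Or.inr ⟨hir, hrj, lt_of_le_of_lt hjv0 hv0s⟩⟩
          · -- s < w : take i = max element of b below s, j = its successor
            obtain ⟨i, hib, his, hv0i, himax⟩ := exists_max_below hv0b hv0s
            obtain ⟨j, harc, hjb, hij, _⟩ := exists_succ hb hib hwb (lt_trans his hsw)
            have hsj : s < j := by
              rcases lt_trichotomy j s with h | h | h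
              · exact absurd hij (not_lt.2 (himax j hjb h))
              · exact absurd (h ▸ hjb) hsb
              · exact h
            exact ⟨(i, j), mem_arcs.2 harc, hib, hjb,
              Or.inl ⟨lt_of_lt_of_le hv0r hv0i, his, hsj⟩⟩
        rw [if_neg hin, if_pos hcr]
    rw [h23]
    have h1c : 1 ≤ (b.filter (fun v => r < v ∧ v < s)).card := Finset.card_pos.2 hSne
    omega
  -- degenerate case
  · have hnone : ∀ v ∈ b, ¬(r < v ∧ v < s) := by
      intro v hv hc
      exact hSe ⟨v, Finset.mem_filter.2 ⟨hv, hc⟩⟩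
    have hT1 : ((arcs P).filter
        (fun α => (r < α.1 ∧ α.2 < s) ∧ α.1 ∈ b ∧ α.2 ∈ b)).card = 0 := by
      rw [Finset.card_eq_zero, Finset.filter_eq_empty_iff]
      rintro α hα ⟨⟨hr1, hs2⟩, h1b, h2b⟩
      have h12 := (mem_arcs.1 hα).1
      exact hnone α.1 h1b ⟨hr1, lt_trans h12 hs2⟩
    have hT2 : ¬ ∀ v ∈ b, r < v ∧ v < s := by
      obtain ⟨v, hv⟩ := P.nonempty_of_mem_parts hb
      intro h
      exact hnone v hv (h v hv)
    have hT3 : ¬ ∃ p ∈ arcs P, p.1 ∈ b ∧ p.2 ∈ b ∧ ArcCross (r, s) p := by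
      rintro ⟨p, _, h1b, h2b, hcr⟩
      rcases hcr with ⟨h1, h2, h3⟩ | ⟨h1, h2, h3⟩
      · exact hnone p.1 h1b ⟨h1, h2⟩
      · exact hnone p.2 h2b ⟨h2, h3⟩
    have hRHS : (b.filter (fun v => r < v ∧ v < s)).card = 0 := by
      rw [Finset.card_eq_zero]
      exact Finset.not_nonempty_iff_eq_empty.1 hSe
    rw [hT1, hRHS, if_neg hT2, if_neg hT3]

end aux

section aux2
variable {n : ℕ} {P : Finpartition (Finset.univ : Finset (Fin n))}

lemma perArc {β : Fin n × Fin n} (hβ : β ∈ arcs P) :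
    ((arcs P).filter (fun α => β.1 < α.1 ∧ α.2 < β.2)).card
      + ((P.parts.filter (fun b => ∀ v ∈ b, β.1 < v ∧ v < β.2)).card
      + crossNum P β)
    = (Finset.univ.filter (fun v => β.1 < v ∧ v < β.2)).card := by
  have hβ' := mem_arcs.1 hβ
  have hRHS : (Finset.univ.filter (fun v => β.1 < v ∧ v < β.2))
      = P.parts.biUnion (fun b => b.filter (fun v => β.1 < v ∧ v < β.2)) := by
    ext v
    simp only [Finset.mem_biUnion, Finset.mem_filter, Finset.mem_univ, true_and]
    constructor
    · intro hv
      obtain ⟨b, hb, hvb⟩ := P.exists_mem (Finset.mem_univ v)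
      exact ⟨b, hb, hvb, hv⟩
    · rintro ⟨b, hb, hvb, hv⟩
      exact hv
  have hLHS : ((arcs P).filter (fun α => β.1 < α.1 ∧ α.2 < β.2))
      = P.parts.biUnion (fun b => (arcs P).filter
          (fun α => (β.1 < α.1 ∧ α.2 < β.2) ∧ α.1 ∈ b ∧ α.2 ∈ b)) := by
    ext α
    simp only [Finset.mem_biUnion, Finset.mem_filter]
    constructor
    · rintro ⟨hα, hnest⟩
      obtain ⟨b, hb, h1b⟩ := P.exists_mem (Finset.mem_univ α.1)
      exact ⟨b, hb, ⟨hα, hnest, h1b, (arc_spec (mem_arcs.1 hα) hb h1b).1⟩⟩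
    · rintro ⟨b, hb, hα, hnest, h1b, h2b⟩
      exact ⟨hα, hnest⟩
  have hdisj1 : ∀ b ∈ P.parts, ∀ c ∈ P.parts, b ≠ c →
      Disjoint (b.filter (fun v => β.1 < v ∧ v < β.2))
        (c.filter (fun v => β.1 < v ∧ v < β.2)) := by
    intro b hb c hc hne
    rw [Finset.disjoint_left]
    intro v hvb hvc
    exact hne (P.eq_of_mem_parts hb hc (Finset.mem_filter.1 hvb).1
      (Finset.mem_filter.1 hvc).1)
  have hdisj2 : ∀ b ∈ P.parts, ∀ c ∈ P.parts, b ≠ c →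
      Disjoint ((arcs P).filter
          (fun α => (β.1 < α.1 ∧ α.2 < β.2) ∧ α.1 ∈ b ∧ α.2 ∈ b))
        ((arcs P).filter
          (fun α => (β.1 < α.1 ∧ α.2 < β.2) ∧ α.1 ∈ c ∧ α.2 ∈ c)) := by
    intro b hb c hc hne
    rw [Finset.disjoint_left]
    intro α hαb hαc
    exact hne (P.eq_of_mem_parts hb hc (Finset.mem_filter.1 hαb).2.2.1
      (Finset.mem_filter.1 hαc).2.2.1)
  rw [hRHS, hLHS, Finset.card_biUnion hdisj1, Finset.card_biUnion hdisj2]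
  unfold crossNum
  rw [Finset.card_filter, Finset.card_filter, ← Finset.sum_add_distrib,
    ← Finset.sum_add_distrib]
  refine Finset.sum_congr rfl fun b hb => ?_
  exact perBlock hβ' hb

lemma key (n : ℕ) (P : Finpartition (Finset.univ : Finset (Fin n))) :
    (∑ α ∈ arcs P, depthArc P α) + ((∑ b ∈ P.parts, depthBlock P b)
      + ∑ α ∈ arcs P, crossNum P α)
    = ∑ v : Fin n, depthV P v := by
  have h1 : ∑ v : Fin n, depthV P v
      = ∑ p ∈ arcs P, (Finset.univ.filter (fun v => p.1 < v ∧ v < p.2)).card := by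
    simp only [depthV, Finset.card_filter]
    exact Finset.sum_comm
  have h2 : ∑ α ∈ arcs P, depthArc P α
      = ∑ p ∈ arcs P, ((arcs P).filter (fun α => p.1 < α.1 ∧ α.2 < p.2)).card := by
    simp only [depthArc, Finset.card_filter]
    exact Finset.sum_comm
  have h3 : ∑ b ∈ P.parts, depthBlock P b
      = ∑ p ∈ arcs P, (P.parts.filter (fun b => ∀ v ∈ b, p.1 < v ∧ v < p.2)).card := by
    simp only [depthBlock, Finset.card_filter]
    exact Finset.sum_comm
  rw [h1, h2, h3, ← Finset.sum_add_distrib, ← Finset.sum_add_distrib]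
  exact Finset.sum_congr rfl fun p hp => perArc hp

end aux2

/-- for every set partition `A` of `{1,…,n}`, the depth-index
equals the crossing-index: `t(A) = c(A)`. -/
theorem stmt4 (n : ℕ) (P : Finpartition (Finset.univ : Finset (Fin n))) :
    tIdx P = cIdx P := by
  have h := key n P
  have h' := congrArg (fun k : ℕ => (k : ℤ)) h
  push_cast at h'
  unfold tIdx cIdx
  linarith
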